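/- Let T : F → H be a continuous linear operator between separable Hilbert spaces whose image is dense in H, and let V be a Banach space compactly embedded in H. Then for every ε > 0 there exists a continuous linear operator T_ε : H → F with finite-dimensional range such that ‖T(T_ε h) − h‖_H ≤ ε ‖h‖_V for all h ∈ V. -/

import Mathlib

open Submodule

set_option maxHeartbeats 2000000 in
/-- Approximate right inverse of a bounded linear operator with dense range. -/
theorem stmt_0
    {F H V : Type*}
    [NormedAddCommGroup F] [InnerProductSpace ℝ F] [CompleteSpace F]
    [TopologicalSpace.SeparableSpace F]
    [NormedAddCommGroup H] [InnerProductSpace ℝ H] [CompleteSpace H]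
    [TopologicalSpace.SeparableSpace H]
    [NormedAddCommGroup V] [NormedSpace ℝ V] [CompleteSpace V]
    (T : F →L[ℝ] H) (hT : DenseRange T)
    (ι : V →L[ℝ] H) (hι_inj : Function.Injective ι) (hι_cpt : IsCompactOperator ι) :
    ∀ ε > 0, ∃ Tε : H →L[ℝ] F,
      FiniteDimensional ℝ (LinearMap.range (Tε : H →ₗ[ℝ] F)) ∧
      ∀ v : V, ‖T (Tε (ι v)) - ι v‖ ≤ ε * ‖v‖ := by
  intro ε hε
  -- get compact set K and δ-ball mapped into it
  obtain ⟨K, hK, hKmem⟩ := hι_cpt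
  obtain ⟨δ, hδ, hδsub⟩ := Metric.mem_nhds_iff.mp hKmem
  -- finite ε₁-net of K
  set ε₁ : ℝ := ε * δ / 4 with hε₁def
  have hε₁ : 0 < ε₁ := by positivity
  obtain ⟨s, hsfin, hsnet⟩ :=
    (Metric.totallyBounded_iff.mp hK.totallyBounded) ε₁ hε₁
  -- finite-dimensional subspace
  set G : Submodule ℝ H := Submodule.span ℝ s with hGdef
  haveI : FiniteDimensional ℝ G := FiniteDimensional.span_of_finite ℝ hsfin
  -- distance estimate
  have hdist : ∀ v : V, ‖ι v - (orthogonalProjection G (ι v) : H)‖ ≤ ε / 2 * ‖v‖ := by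
    intro v
    rcases eq_or_ne v 0 with rfl | hv
    · simp
    · have hvn : (0:ℝ) < ‖v‖ := norm_pos_iff.mpr hv
      set c : ℝ := δ / 2 / ‖v‖ with hcdef
      have hc : 0 < c := by positivity
      have hmem : ι (c • v) ∈ K := by
        apply hδsub
        have hnv : ‖c • v‖ = δ / 2 := by
          rw [norm_smul, Real.norm_eq_abs, abs_of_pos hc, hcdef]
          exact div_mul_cancel₀ _ (ne_of_gt hvn)
        rw [Metric.mem_ball, dist_zero_right, hnv]
        linarith
      obtain ⟨y, hy, hyd⟩ := Set.mem_iUnion₂.mp (hsnet hmem)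
      have hyG : c⁻¹ • y ∈ G := Submodule.smul_mem _ _ (Submodule.subset_span hy)
      have hclose : ‖ι v - c⁻¹ • y‖ ≤ ε / 2 * ‖v‖ := by
        have : ι v - c⁻¹ • y = c⁻¹ • (ι (c • v) - y) := by
          rw [smul_sub, map_smul, smul_smul, inv_mul_cancel₀ (ne_of_gt hc), one_smul]
        rw [this, norm_smul, Real.norm_eq_abs, abs_of_pos (inv_pos.mpr hc)]
        have h1 : ‖ι (c • v) - y‖ ≤ ε₁ := by
          have := Metric.mem_ball.mp hyd
          rw [dist_eq_norm] at this
          linarith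
        have h2 : c⁻¹ = 2 * ‖v‖ / δ := by
          rw [hcdef]; field_simp
        calc c⁻¹ * ‖ι (c • v) - y‖ ≤ c⁻¹ * ε₁ := by
              apply mul_le_mul_of_nonneg_left h1 (le_of_lt (inv_pos.mpr hc))
          _ = 2 * ‖v‖ / δ * (ε * δ / 4) := by rw [h2, hε₁def]
          _ = ε / 2 * ‖v‖ := by field_simp; ring
      refine le_trans ?_ hclose
      rw [orthogonalProjection, ← starProjection_apply, starProjection_minimal]
      exact ciInf_le ⟨0, by rintro _ ⟨x, rfl⟩; positivity⟩ (⟨c⁻¹ • y, hyG⟩ : G)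
  -- orthonormal basis of G
  set n : ℕ := Module.finrank ℝ G with hndef
  set b : OrthonormalBasis (Fin n) ℝ G := stdOrthonormalBasis ℝ G with hbdef
  -- approximate preimages of basis vectors
  set δ' : ℝ := ε / (2 * (n + 1) * (‖ι‖ + 1)) with hδ'def
  have hδ' : 0 < δ' := by positivity
  have hf : ∀ i : Fin n, ∃ f : F, ‖T f - (b i : H)‖ ≤ δ' := by
    intro i
    obtain ⟨f, hfd⟩ := hT.exists_dist_lt (b i : H) hδ'
    exact ⟨f, by rw [← dist_eq_norm, dist_comm]; exact le_of_lt hfd⟩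
  choose f hfd using hf
  -- define the finite-rank operator
  set Tε : H →L[ℝ] F := ∑ i : Fin n, (innerSL ℝ ((b i : H))).smulRight (f i) with hTεdef
  have hTεapp : ∀ h : H, Tε h = ∑ i : Fin n, (inner ℝ ((b i : H)) h : ℝ) • f i := by
    intro h
    rw [hTεdef]
    simp [ContinuousLinearMap.sum_apply]
  refine ⟨Tε, ?_, ?_⟩
  · -- finite-dimensional range
    have hle : LinearMap.range (Tε : H →ₗ[ℝ] F) ≤ Submodule.span ℝ (Set.range f) := by
      rintro x ⟨h, rfl⟩
      have : (Tε : H →ₗ[ℝ] F) h = Tε h := rfl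
      rw [this, hTεapp]
      exact Submodule.sum_mem _ fun i _ =>
        Submodule.smul_mem _ _ (Submodule.subset_span ⟨i, rfl⟩)
    haveI : FiniteDimensional ℝ (Submodule.span ℝ (Set.range f)) :=
      FiniteDimensional.span_of_finite ℝ (Set.finite_range f)
    exact Submodule.finiteDimensional_of_le hle
  · -- the estimate
    intro v
    set h : H := ι v with hhdef
    have hproj : (orthogonalProjection G h : H) = ∑ i : Fin n, (inner ℝ ((b i : H)) h : ℝ) • (b i : H) := by
      have := b.orthogonalProjectionOnto_apply_eq_sum h
      calc (orthogonalProjection G h : H) = ((∑ i, (inner ℝ ((b i : H)) h : ℝ) • b i : G) : H) := by rw [orthogonalProjection, this]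
      _ = ∑ i : Fin n, (inner ℝ ((b i : H)) h : ℝ) • (b i : H) := by push_cast; rfl
    have key : T (Tε h) - h =
        (∑ i : Fin n, (inner ℝ ((b i : H)) h : ℝ) • (T (f i) - (b i : H)))
          + ((orthogonalProjection G h : H) - h) := by
      rw [hproj, hTεapp, map_sum]
      simp only [map_smul, smul_sub]
      rw [Finset.sum_sub_distrib]
      abel
    have hbnorm : ∀ i : Fin n, ‖(b i : H)‖ = 1 := by
      intro i
      exact b.orthonormal.1 i
    have hsum : ‖∑ i : Fin n, (inner ℝ ((b i : H)) h : ℝ) • (T (f i) - (b i : H))‖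
        ≤ n * δ' * ‖h‖ := by
      calc ‖∑ i : Fin n, (inner ℝ ((b i : H)) h : ℝ) • (T (f i) - (b i : H))‖
          ≤ ∑ i : Fin n, ‖(inner ℝ ((b i : H)) h : ℝ) • (T (f i) - (b i : H))‖ :=
            norm_sum_le _ _
        _ ≤ ∑ _i : Fin n, δ' * ‖h‖ := by
            apply Finset.sum_le_sum
            intro i _
            rw [norm_smul, Real.norm_eq_abs]
            have h1 : |(inner ℝ ((b i : H)) h : ℝ)| ≤ ‖h‖ := by
              calc |(inner ℝ ((b i : H)) h : ℝ)| ≤ ‖(b i : H)‖ * ‖h‖ := abs_real_inner_le_norm _ _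
              _ = ‖h‖ := by rw [hbnorm i, one_mul]
            calc |(inner ℝ ((b i : H)) h : ℝ)| * ‖T (f i) - (b i : H)‖
                ≤ ‖h‖ * δ' := mul_le_mul h1 (hfd i) (norm_nonneg _) (norm_nonneg _)
              _ = δ' * ‖h‖ := mul_comm _ _
        _ = n * δ' * ‖h‖ := by rw [Finset.sum_const, Finset.card_fin]; push_cast; ring
    have hhle : ‖h‖ ≤ ‖ι‖ * ‖v‖ := ι.le_opNorm v
    have hfinal : (n : ℝ) * δ' * ‖h‖ ≤ ε / 2 * ‖v‖ := by
      have hδ'eq : (2 * (n + 1) * (‖ι‖ + 1)) * δ' = ε := by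
        rw [hδ'def]; field_simp
      have h1 : (n : ℝ) * δ' * ‖h‖ ≤ (n : ℝ) * δ' * (‖ι‖ * ‖v‖) :=
        mul_le_mul_of_nonneg_left hhle (by positivity)
      have h2 : (n : ℝ) * δ' * (‖ι‖ * ‖v‖) ≤ ((n : ℝ) + 1) * (‖ι‖ + 1) * δ' * ‖v‖ := by
        have : (n : ℝ) * ‖ι‖ ≤ ((n : ℝ) + 1) * (‖ι‖ + 1) := by
          have h3 : (0:ℝ) ≤ n := Nat.cast_nonneg n
          have h4 : (0:ℝ) ≤ ‖ι‖ := norm_nonneg _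
          nlinarith
        have := mul_le_mul_of_nonneg_right this (mul_nonneg hδ'.le (norm_nonneg v))
        nlinarith [hδ'.le, norm_nonneg v]
      have h3 : ((n : ℝ) + 1) * (‖ι‖ + 1) * δ' = ε / 2 := by
        rw [hδ'def]; field_simp
      calc (n : ℝ) * δ' * ‖h‖ ≤ ((n : ℝ) + 1) * (‖ι‖ + 1) * δ' * ‖v‖ := le_trans h1 h2
        _ = ε / 2 * ‖v‖ := by rw [h3]
    calc ‖T (Tε h) - h‖
        ≤ ‖∑ i : Fin n, (inner ℝ ((b i : H)) h : ℝ) • (T (f i) - (b i : H))‖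
          + ‖(orthogonalProjection G h : H) - h‖ := by rw [key]; exact norm_add_le _ _
      _ ≤ n * δ' * ‖h‖ + ε / 2 * ‖v‖ := by
          refine add_le_add hsum ?_
          rw [norm_sub_rev]
          exact hdist v
      _ ≤ ε / 2 * ‖v‖ + ε / 2 * ‖v‖ := add_le_add_left hfinal _
      _ = ε * ‖v‖ := by ring
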